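/- The complete graph K_n has book thickness exactly ⌈n/2⌉ for n ≥ 4. -/

import Mathlib

open SimpleGraph

/-- Two edges `e` and `f` interleave under the vertex order `L`:
there are endpoints `a, b` of `e` and `c, d` of `f` with `L a < L c < L b < L d`. -/
def Interleaves {V : Type*} (L : V → ℕ) (e f : Sym2 V) : Prop :=
  ∃ a b c d : V, e = s(a, b) ∧ f = s(c, d) ∧ L a < L c ∧ L c < L b ∧ L b < L d

/-- `G` admits a `k`-page book embedding with respect to the fixed vertex order `L`:
the edges can be partitioned into `k` pages so that no two edges on the same page
interleave under `L`. -/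
def PagesWrt {V : Type*} (G : SimpleGraph V) (L : V → ℕ) (k : ℕ) : Prop :=
  ∃ σ : G.edgeSet → Fin k,
    ∀ e f : G.edgeSet, σ e = σ f → ¬ Interleaves L (e : Sym2 V) (f : Sym2 V)

/-- `G` admits a `k`-page book embedding: an injective linear order of the vertices
together with a partition of the edges into `k` pages with no two edges on the same
page interleaving. -/
def HasBookEmbedding {V : Type*} (G : SimpleGraph V) (k : ℕ) : Prop :=
  ∃ L : V → ℕ, Function.Injective L ∧ PagesWrt G L k

/-- A drawing of a graph `G` in the plane: vertices are mapped to distinct points,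
and each edge is drawn as a simple continuous arc between its endpoints whose
interior avoids all vertex points. -/
structure Drawing {V : Type*} (G : SimpleGraph V) where
  pos : V → ℝ × ℝ
  posInj : Function.Injective pos
  arc : Sym2 V → ℝ → ℝ × ℝ
  cont : ∀ e ∈ G.edgeSet, ContinuousOn (arc e) (Set.Icc 0 1)
  endpts : ∀ u v : V, G.Adj u v →
    (arc s(u, v) 0 = pos u ∧ arc s(u, v) 1 = pos v) ∨
    (arc s(u, v) 0 = pos v ∧ arc s(u, v) 1 = pos u)
  injArc : ∀ e ∈ G.edgeSet, Set.InjOn (arc e) (Set.Icc 0 1)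
  noVertexInterior : ∀ e ∈ G.edgeSet, ∀ t ∈ Set.Ioo (0:ℝ) 1, ∀ v : V, arc e t ≠ pos v

/-- The set of crossing points of two edges in a drawing: common points of the
interiors of the two arcs. -/
def Drawing.CrossingPts {V : Type*} {G : SimpleGraph V} (D : Drawing G)
    (e f : Sym2 V) : Set (ℝ × ℝ) :=
  {p | ∃ t ∈ Set.Ioo (0:ℝ) 1, ∃ s ∈ Set.Ioo (0:ℝ) 1, D.arc e t = p ∧ D.arc f s = p}

/-- Two distinct edges cross in a drawing if their interiors meet. -/
def Drawing.Crosses {V : Type*} {G : SimpleGraph V} (D : Drawing G)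
    (e f : Sym2 V) : Prop :=
  e ≠ f ∧ (D.CrossingPts e f).Nonempty

/-- A drawing is planar if no two edges cross. -/
def Drawing.IsPlanarDrawing {V : Type*} {G : SimpleGraph V} (D : Drawing G) : Prop :=
  ∀ e ∈ G.edgeSet, ∀ f ∈ G.edgeSet, ¬ D.Crosses e f

/-- A drawing is 1-planar if every edge is crossed at most once: each edge crosses
at most one other edge, and any two edges cross in at most one point. -/
def Drawing.IsOnePlanarDrawing {V : Type*} {G : SimpleGraph V} (D : Drawing G) : Prop :=
  ∀ e ∈ G.edgeSet,
    {f | f ∈ G.edgeSet ∧ D.Crosses e f}.Subsingleton ∧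
    ∀ f ∈ G.edgeSet, (D.CrossingPts e f).Subsingleton

/-- A graph is planar if it admits a planar drawing. -/
def IsPlanar {V : Type*} (G : SimpleGraph V) : Prop :=
  ∃ D : Drawing G, D.IsPlanarDrawing

/-- A graph is 1-planar if it admits a drawing in which every edge is crossed
at most once. -/
def IsOnePlanar {V : Type*} (G : SimpleGraph V) : Prop :=
  ∃ D : Drawing G, D.IsOnePlanarDrawing

/-- The planar skeleton of a drawing: the subgraph of edges that are not crossed. -/
def Drawing.skeleton {V : Type*} {G : SimpleGraph V} (D : Drawing G) : SimpleGraph V where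
  Adj u v := G.Adj u v ∧ ∀ f ∈ G.edgeSet, ¬ D.Crosses s(u, v) f
  symm := by
    constructor
    intro u v h
    refine ⟨h.1.symm, ?_⟩
    rw [Sym2.eq_swap]
    exact h.2
  loopless := ⟨fun v h => G.irrefl h.1⟩

/-- The book thickness of a graph: the least number of pages over all book
embeddings. -/
noncomputable def bookThickness {V : Type*} (G : SimpleGraph V) : ℕ :=
  sInf {k : ℕ | HasBookEmbedding G k}



section BookAux
open Finset

def IsDiag (P : Finset ℕ) (e : ℕ × ℕ) : Prop :=
  e.1 ∈ P ∧ e.2 ∈ P ∧ e.1 < e.2 ∧ (∃ c ∈ P, e.1 < c ∧ c < e.2) ∧ (∃ c ∈ P, c < e.1 ∨ e.2 < c)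

lemma polygon (P : Finset ℕ) : ∀ S : Finset (ℕ × ℕ),
    (∀ e ∈ S, IsDiag P e) →
    (∀ e ∈ S, ∀ f ∈ S, ¬(e.1 < f.1 ∧ f.1 < e.2 ∧ e.2 < f.2)) →
    S.card ≤ P.card - 3 := by
  classical
  induction P using Finset.strongInduction with
  | _ P ih =>
  intro S hdiag hnc
  rcases S.eq_empty_or_nonempty with rfl | ⟨⟨a, b⟩, hab⟩
  · simp
  obtain ⟨haP, hbP, hlt, ⟨c0, hc0P, hc0⟩, ⟨c1, hc1P, hc1⟩⟩ := hdiag _ hab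
  set P1 : Finset ℕ := P.filter (fun x => a ≤ x ∧ x ≤ b) with hP1
  set P2 : Finset ℕ := P.filter (fun x => x ≤ a ∨ b ≤ x) with hP2
  set S1 : Finset (ℕ × ℕ) := S.filter (fun e => a ≤ e.1 ∧ e.2 ≤ b ∧ e ≠ (a, b)) with hS1
  set S2 : Finset (ℕ × ℕ) := S.filter
    (fun e => ¬(a < e.1 ∧ e.1 < b) ∧ ¬(a < e.2 ∧ e.2 < b) ∧ e ≠ (a, b)) with hS2
  have haP1 : a ∈ P1 := by simp [hP1, haP, le_of_lt hlt]
  have hbP1 : b ∈ P1 := by simp [hP1, hbP, le_of_lt hlt]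
  have hc0P1 : c0 ∈ P1 := by simp [hP1, hc0P]; omega
  have haP2 : a ∈ P2 := by simp [hP2, haP]
  have hbP2 : b ∈ P2 := by simp [hP2, hbP]
  have hc1P2 : c1 ∈ P2 := by simp [hP2, hc1P]; omega
  -- cover
  have hcover : S ⊆ insert (a, b) (S1 ∪ S2) := by
    intro e he
    by_cases heab : e = (a, b)
    · simp [heab]
    obtain ⟨_, _, hxy, _, _⟩ := hdiag _ he
    have h1 := hnc _ hab _ he
    have h2 := hnc _ he _ hab
    simp only [mem_insert, mem_union, hS1, hS2, mem_filter]
    refine Or.inr ?_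
    rcases (by omega : (a ≤ e.1 ∧ e.2 ≤ b) ∨ (¬(a < e.1 ∧ e.1 < b) ∧ ¬(a < e.2 ∧ e.2 < b))) with h | h
    · exact Or.inl ⟨he, h.1, h.2, heab⟩
    · exact Or.inr ⟨he, h.1, h.2, heab⟩
  have hdisj : Disjoint S1 S2 := by
    rw [Finset.disjoint_left]
    rintro ⟨x, y⟩ h1 h2
    simp only [hS1, hS2, mem_filter] at h1 h2
    obtain ⟨hx, hy, hne⟩ := h1.2
    obtain ⟨hx2, hy2, -⟩ := h2.2
    have hxy := (hdiag _ h1.1).2.2.1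
    simp only at *
    have : x = a ∧ y = b := by omega
    exact hne (by simp [this.1, this.2])
  -- IH on S1
  have hP1ss : P1 ⊂ P := by
    refine Finset.ssubset_iff_of_subset (filter_subset _ _) |>.mpr ⟨c1, hc1P, ?_⟩
    simp [hP1]; omega
  have hP2ss : P2 ⊂ P := by
    refine Finset.ssubset_iff_of_subset (filter_subset _ _) |>.mpr ⟨c0, hc0P, ?_⟩
    simp [hP2]; omega
  have hcard1 : S1.card ≤ P1.card - 3 := by
    refine ih P1 hP1ss S1 ?_ ?_
    · rintro ⟨x, y⟩ he
      simp only [hS1, mem_filter] at he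
      obtain ⟨heS, hax, hyb, hne⟩ := he
      obtain ⟨hxP, hyP, hxy, ⟨c, hcP, hc⟩, -⟩ := hdiag _ heS
      have hne' : a < x ∨ y < b := by
        rcases eq_or_lt_of_le hax with rfl | h
        · rcases eq_or_lt_of_le hyb with rfl | h2
          · exact absurd rfl hne
          · exact Or.inr h2
        · exact Or.inl h
      refine ⟨by simp [hP1, hxP]; omega, by simp [hP1, hyP]; omega,
        hxy, ⟨c, by simp [hP1, hcP]; omega, hc⟩, ?_⟩
      rcases hne' with h | h
      · exact ⟨a, haP1, Or.inl h⟩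
      · exact ⟨b, hbP1, Or.inr h⟩
    · intro e he f hf
      exact hnc _ (filter_subset _ _ he) _ (filter_subset _ _ hf)
  have hcard2 : S2.card ≤ P2.card - 3 := by
    refine ih P2 hP2ss S2 ?_ ?_
    · rintro ⟨x, y⟩ he
      simp only [hS2, mem_filter] at he
      obtain ⟨heS, hx, hy, hne⟩ := he
      obtain ⟨hxP, hyP, hxy, ⟨c, hcP, hc⟩, ⟨d, hdP, hd⟩⟩ := hdiag _ heS
      simp only at hx hy hc hd ⊢
      have hxP2 : x ∈ P2 := by simp [hP2, hxP]; omega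
      have hyP2 : y ∈ P2 := by simp [hP2, hyP]; omega
      refine ⟨hxP2, hyP2, hxy, ?_, ?_⟩
      · by_cases hcin : a < c ∧ c < b
        · -- then x ≤ a and b ≤ y
          have hxa : x ≤ a := by omega
          have hby : b ≤ y := by omega
          have : x < a ∨ b < y := by
            rcases eq_or_lt_of_le hxa with rfl | h
            · rcases eq_or_lt_of_le hby with rfl | h2
              · exact absurd rfl hne
              · exact Or.inr h2
            · exact Or.inl h
          rcases this with h | h
          · exact ⟨a, haP2, h, by omega⟩
          · exact ⟨b, hbP2, by omega, h⟩
        · exact ⟨c, by simp [hP2, hcP]; omega, hc⟩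
      · by_cases hdin : a < d ∧ d < b
        · rcases hd with h | h
          · exact ⟨a, haP2, Or.inl (by omega)⟩
          · exact ⟨b, hbP2, Or.inr (by omega)⟩
        · exact ⟨d, by simp [hP2, hdP]; omega, hd⟩
    · intro e he f hf
      exact hnc _ (filter_subset _ _ he) _ (filter_subset _ _ hf)
  -- cards of P1 P2
  have h3P1 : 3 ≤ P1.card := by
    have : ({a, c0, b} : Finset ℕ) ⊆ P1 := by
      intro x hx; simp at hx; rcases hx with rfl | rfl | rfl <;> assumption
    calc 3 = ({a, c0, b} : Finset ℕ).card := by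
              rw [card_insert_of_notMem (by simp; omega), card_insert_of_notMem (by simp; omega),
                card_singleton]
         _ ≤ P1.card := card_le_card this
  have h3P2 : 3 ≤ P2.card := by
    have : ({a, c1, b} : Finset ℕ) ⊆ P2 := by
      intro x hx; simp at hx; rcases hx with rfl | rfl | rfl <;> assumption
    calc 3 = ({a, c1, b} : Finset ℕ).card := by
              rw [card_insert_of_notMem (by simp; omega), card_insert_of_notMem (by simp; omega),
                card_singleton]
         _ ≤ P2.card := card_le_card this
  have hPP : P1.card + P2.card = P.card + 2 := by
    have hu : P1 ∪ P2 = P := by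
      apply Finset.Subset.antisymm
      · exact Finset.union_subset (filter_subset _ _) (filter_subset _ _)
      · intro x hx
        simp only [mem_union, hP1, hP2, mem_filter]
        rcases le_total x a with h | h
        · exact Or.inr ⟨hx, Or.inl h⟩
        · rcases le_total b x with h2 | h2
          · exact Or.inr ⟨hx, Or.inr h2⟩
          · exact Or.inl ⟨hx, by omega, by omega⟩
    have hi : P1 ∩ P2 = {a, b} := by
      apply Finset.Subset.antisymm
      · intro x hx
        simp only [mem_inter, hP1, hP2, mem_filter] at hx
        simp; omega
      · intro x hx
        simp only [mem_inter]
        simp at hx; rcases hx with rfl | rfl <;> exact ⟨by assumption, by assumption⟩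
    have := Finset.card_union_add_card_inter P1 P2
    rw [hu, hi] at this
    have hab2 : ({a, b} : Finset ℕ).card = 2 := by
      rw [card_insert_of_notMem (by simp; omega), card_singleton]
    omega
  have hle : S.card ≤ 1 + S1.card + S2.card := by
    calc S.card ≤ (insert (a, b) (S1 ∪ S2)).card := card_le_card hcover
      _ ≤ (S1 ∪ S2).card + 1 := card_insert_le _ _
      _ ≤ S1.card + S2.card + 1 := by rw [card_union_of_disjoint hdisj]
      _ ≤ 1 + S1.card + S2.card := by omega
  omega

lemma mod_class_eq {a b m : ℕ} (ha : a ≤ m) (hb : b ≤ m) (h : a % m = b % m) :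
    a = b ∨ (a = 0 ∧ b = m) ∨ (a = m ∧ b = 0) := by
  rcases eq_or_lt_of_le ha with rfl | ha'
  · rcases eq_or_lt_of_le hb with rfl | hb'
    · left; rfl
    · rw [Nat.mod_self, Nat.mod_eq_of_lt hb'] at h; omega
  · rcases eq_or_lt_of_le hb with rfl | hb'
    · rw [Nat.mod_self, Nat.mod_eq_of_lt ha'] at h; omega
    · rw [Nat.mod_eq_of_lt ha', Nat.mod_eq_of_lt hb'] at h; left; exact h

lemma kn_upper (n : ℕ) (hn : 1 ≤ n) :
    HasBookEmbedding (⊤ : SimpleGraph (Fin n)) ((n + 1) / 2) := by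
  set m := (n + 1) / 2 with hm
  have hm0 : 0 < m := by omega
  set N := 2 * m with hN
  have hnN : n ≤ N := by omega
  refine ⟨Fin.val, Fin.val_injective, ?_⟩
  set pg : Sym2 (Fin n) → ℕ :=
    Sym2.lift ⟨fun u v => (((u : ℕ) + (v : ℕ)) % N + 1) / 2 % m,
      by intro u v; simp [Nat.add_comm]⟩ with hpg
  have hplt : ∀ e : Sym2 (Fin n), pg e < m := by
    intro e
    induction e using Sym2.ind with
    | _ u v => simp only [hpg, Sym2.lift_mk]; exact Nat.mod_lt _ hm0
  refine ⟨fun e => ⟨pg e.val, hplt e.val⟩, ?_⟩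
  rintro e f hpage ⟨a, b, c, d, he, hf, h1, h2, h3⟩
  have hpe : pg e.val = pg f.val := by
    have := congrArg Fin.val hpage
    simpa using this
  rw [he, hf] at hpe
  simp only [hpg, Sym2.lift_mk] at hpe
  -- arithmetic
  set s := (a : ℕ) + (b : ℕ) with hs
  set t := (c : ℕ) + (d : ℕ) with ht
  have hda : (a : ℕ) < n := a.isLt
  have hdb : (b : ℕ) < n := b.isLt
  have hdc : (c : ℕ) < n := c.isLt
  have hdd : (d : ℕ) < n := d.isLt
  have hstep : 2 ≤ t - s ∧ t ≤ s + N - 2 := by constructor <;> omega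
  have hsN : s < 2 * N := by omega
  have htN : t < 2 * N := by omega
  have hrs : s % N = s ∨ (N ≤ s ∧ s % N = s - N) := by
    rcases Nat.lt_or_ge s N with h | h
    · exact Or.inl (Nat.mod_eq_of_lt h)
    · refine Or.inr ⟨h, ?_⟩
      rw [Nat.mod_eq_sub_mod h, Nat.mod_eq_of_lt (by omega)]
  have hrt : t % N = t ∨ (N ≤ t ∧ t % N = t - N) := by
    rcases Nat.lt_or_ge t N with h | h
    · exact Or.inl (Nat.mod_eq_of_lt h)
    · refine Or.inr ⟨h, ?_⟩
      rw [Nat.mod_eq_sub_mod h, Nat.mod_eq_of_lt (by omega)]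
  have hr1 : s % N < N := Nat.mod_lt _ (by omega)
  have hr2 : t % N < N := Nat.mod_lt _ (by omega)
  have hclass := mod_class_eq (a := (s % N + 1) / 2) (b := (t % N + 1) / 2)
    (by omega) (by omega) hpe
  omega

lemma kn_lower (n k : ℕ) (hn : 4 ≤ n)
    (h : HasBookEmbedding (⊤ : SimpleGraph (Fin n)) k) : (n + 1) / 2 ≤ k := by
  classical
  obtain ⟨L, hL, σ, hσ⟩ := h
  set Q : Finset ℕ := Finset.image L Finset.univ with hQ
  have hQcard : Q.card = n := by
    rw [hQ, Finset.card_image_of_injective _ hL, Finset.card_univ, Fintype.card_fin]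
  set φ : Sym2 (Fin n) → ℕ × ℕ :=
    Sym2.lift ⟨fun u v => (min (L u) (L v), max (L u) (L v)),
      by intro u v; simp [min_comm, max_comm]⟩ with hφ
  set E := (⊤ : SimpleGraph (Fin n)).edgeFinset with hE
  -- sorted representation of an edge
  have hrep : ∀ e ∈ E, ∃ u v : Fin n, e = s(u, v) ∧ L u < L v ∧ φ e = (L u, L v) := by
    intro e he
    induction e using Sym2.ind with
    | _ u v =>
      have huv : u ≠ v := by
        rw [hE, mem_edgeFinset] at he
        simpa using he
      have hLuv : L u ≠ L v := fun hc => huv (hL hc)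
      rcases lt_or_gt_of_ne hLuv with hlt | hlt
      · exact ⟨u, v, rfl, hlt, by simp [hφ, min_eq_left hlt.le, max_eq_right hlt.le]⟩
      · exact ⟨v, u, Sym2.eq_swap, hlt, by
          simp [hφ, min_eq_right hlt.le, max_eq_left hlt.le]⟩
  have hφmem : ∀ e ∈ E, (φ e).1 ∈ Q ∧ (φ e).2 ∈ Q ∧ (φ e).1 < (φ e).2 := by
    intro e he
    obtain ⟨u, v, -, hlt, hφe⟩ := hrep e he
    rw [hφe]
    exact ⟨by simp [hQ], by simp [hQ], hlt⟩
  have hφinj : ∀ e ∈ E, ∀ f ∈ E, φ e = φ f → e = f := by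
    intro e he f hf hef
    obtain ⟨u, v, hes, hlt, hφe⟩ := hrep e he
    obtain ⟨u', v', hfs, hlt', hφf⟩ := hrep f hf
    rw [hφe, hφf] at hef
    have h1 : L u = L u' := congrArg Prod.fst hef
    have h2 : L v = L v' := congrArg Prod.snd hef
    rw [hes, hfs, hL h1, hL h2]
  -- page function
  set τ : Sym2 (Fin n) → ℕ := fun e =>
    if h : e ∈ (⊤ : SimpleGraph (Fin n)).edgeSet then (σ ⟨e, h⟩ : ℕ) else 0 with hτ
  set C := E.filter (fun e => IsDiag Q (φ e)) with hC
  -- per page bound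
  have hpage : ∀ p : ℕ, (C.filter (fun e => τ e = p)).card ≤ n - 3 := by
    intro p
    set D := C.filter (fun e => τ e = p) with hD
    have hDE : D ⊆ E := (filter_subset _ _).trans (filter_subset _ _)
    have himg : (D.image φ).card = D.card :=
      card_image_of_injOn (fun e he f hf => hφinj e (hDE he) f (hDE hf))
    have hpoly : (D.image φ).card ≤ Q.card - 3 := by
      apply polygon
      · intro x hx
        obtain ⟨e, he, rfl⟩ := Finset.mem_image.mp hx
        exact (Finset.mem_filter.mp (Finset.mem_filter.mp he).1).2
      · rintro x hx y hy ⟨hxy1, hxy2, hxy3⟩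
        obtain ⟨e, he, rfl⟩ := Finset.mem_image.mp hx
        obtain ⟨f, hf, rfl⟩ := Finset.mem_image.mp hy
        have heE : e ∈ E := hDE he
        have hfE : f ∈ E := hDE hf
        have heS : e ∈ (⊤ : SimpleGraph (Fin n)).edgeSet := by rwa [hE, mem_edgeFinset] at heE
        have hfS : f ∈ (⊤ : SimpleGraph (Fin n)).edgeSet := by rwa [hE, mem_edgeFinset] at hfE
        have hτe : τ e = p := (Finset.mem_filter.mp he).2
        have hτf : τ f = p := (Finset.mem_filter.mp hf).2
        have hσef : σ ⟨e, heS⟩ = σ ⟨f, hfS⟩ := by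
          apply Fin.ext
          have h1 : τ e = (σ ⟨e, heS⟩ : ℕ) := by simp only [hτ]; exact dif_pos heS
          have h2 : τ f = (σ ⟨f, hfS⟩ : ℕ) := by simp only [hτ]; exact dif_pos hfS
          omega
        obtain ⟨u, v, hes, hlt, hφe⟩ := hrep e heE
        obtain ⟨u', v', hfs, hlt', hφf⟩ := hrep f hfE
        refine hσ ⟨e, heS⟩ ⟨f, hfS⟩ hσef ⟨u, v, u', v', hes, hfs, ?_, ?_, ?_⟩ <;>
          rw [hφe] at hxy1 hxy2 hxy3 <;> rw [hφf] at hxy1 hxy2 hxy3 <;> simpa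
    rw [hQcard] at hpoly
    omega
  -- total
  have hcount : C.card ≤ k * (n - 3) := by
    have hmem : ∀ e ∈ C, τ e ∈ Finset.range k := by
      intro e he
      have heE : e ∈ E := (filter_subset _ _) he
      have heS : e ∈ (⊤ : SimpleGraph (Fin n)).edgeSet := by rwa [hE, mem_edgeFinset] at heE
      rw [Finset.mem_range]
      have h1 : τ e = (σ ⟨e, heS⟩ : ℕ) := by simp only [hτ]; exact dif_pos heS
      rw [h1]
      exact (σ ⟨e, heS⟩).isLt
    rw [Finset.card_eq_sum_card_fiberwise hmem]
    calc ∑ p ∈ Finset.range k, (C.filter (fun e => τ e = p)).card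
        ≤ (Finset.range k).card • (n - 3) :=
          Finset.sum_le_card_nsmul _ _ _ (fun p _ => hpage p)
      _ = k * (n - 3) := by simp [smul_eq_mul]
  -- lower bound on C.card
  have hsplit : C.card + (E.filter (fun e => ¬ IsDiag Q (φ e))).card = E.card :=
    Finset.card_filter_add_card_filter_not _
  set NC := E.filter (fun e => ¬ IsDiag Q (φ e)) with hNC
  have hQne : Q.Nonempty := by
    rw [← Finset.card_pos, hQcard]; omega
  have hNCcard : NC.card ≤ n := by
    set NB := NC.filter (fun e => ¬ ∃ c ∈ Q, (φ e).1 < c ∧ c < (φ e).2) with hNB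
    set NO := NC.filter (fun e => ∃ c ∈ Q, (φ e).1 < c ∧ c < (φ e).2) with hNO
    have hsplit2 : NO.card + NB.card = NC.card :=
      Finset.card_filter_add_card_filter_not _
    have hNOcard : NO.card ≤ 1 := by
      apply Finset.card_le_one.mpr
      intro e he f hf
      have hdiagfail : ∀ g ∈ NO, φ g = (Q.min' hQne, Q.max' hQne) := by
        intro g hg
        simp only [hNO, hNC, Finset.mem_filter] at hg
        obtain ⟨⟨hgE, hgnd⟩, hbet⟩ := hg
        obtain ⟨h1, h2, h3⟩ := hφmem g hgE
        have hout : ¬ ∃ c ∈ Q, c < (φ g).1 ∨ (φ g).2 < c := by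
          intro hc
          exact hgnd ⟨h1, h2, h3, hbet, hc⟩
        push_neg at hout
        have hm1 := hout _ (Q.min'_mem hQne)
        have hm2 := hout _ (Q.max'_mem hQne)
        have hmin : (φ g).1 = Q.min' hQne := le_antisymm hm1.1 (Q.min'_le _ h1)
        have hmax : (φ g).2 = Q.max' hQne := le_antisymm (Q.le_max' _ h2) hm2.2
        exact Prod.ext hmin hmax
      have heE : e ∈ E := (filter_subset _ _ ((filter_subset _ _) he))
      have hfE : f ∈ E := (filter_subset _ _ ((filter_subset _ _) hf))
      exact hφinj e heE f hfE ((hdiagfail e he).trans (hdiagfail f hf).symm)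
    have hNBcard : NB.card ≤ n - 1 := by
      have : NB.card ≤ (Q.erase (Q.min' hQne)).card := by
        apply Finset.card_le_card_of_injOn (fun e => (φ e).2)
        · intro e he
          simp only [Finset.mem_coe, Finset.coe_filter, Set.mem_setOf_eq, hNB, hNC, Finset.mem_filter] at he
          obtain ⟨⟨heE, -⟩, -⟩ := he
          obtain ⟨h1, h2, h3⟩ := hφmem e heE
          apply Finset.mem_erase.mpr
          refine ⟨?_, h2⟩
          intro hc
          simp only at hc
          have := Q.min'_le _ h1
          omega
        · intro e he f hf hef
          simp only at hef
          simp only [Finset.coe_filter, Set.mem_setOf_eq, hNB, hNC, Finset.mem_filter] at he hf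
          obtain ⟨⟨heE, -⟩, hbe⟩ := he
          obtain ⟨⟨hfE, -⟩, hbf⟩ := hf
          obtain ⟨h1, h2, h3⟩ := hφmem e heE
          obtain ⟨h1', h2', h3'⟩ := hφmem f hfE
          push_neg at hbe hbf
          have hfst : (φ e).1 = (φ f).1 := by
            rcases lt_trichotomy (φ e).1 (φ f).1 with hc | hc | hc
            · have := hbe _ h1' hc; omega
            · exact hc
            · have := hbf _ h1 hc; omega
          exact hφinj e heE f hfE (Prod.ext hfst hef)
      have : (Q.erase (Q.min' hQne)).card = n - 1 := by
        rw [Finset.card_erase_of_mem (Q.min'_mem hQne), hQcard]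
      omega
    omega
  -- edge count
  have hEcard : E.card = n.choose 2 := by
    rw [hE, card_edgeFinset_top_eq_card_choose_two]; simp
  -- arithmetic wrap-up
  set c := n.choose 2 with hc
  have h2c : 2 * c = n * (n - 1) := by
    rw [hc, Nat.choose_two_right]
    have hev : 2 ∣ n * (n - 1) := by
      rcases Nat.even_or_odd n with he | ho
      · exact Dvd.dvd.mul_right he.two_dvd _
      · exact Dvd.dvd.mul_left (Nat.Odd.sub_odd ho odd_one).two_dvd _
    omega
  have hmul1 : n * 2 ≤ n * (n - 1) := Nat.mul_le_mul_left n (by omega)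
  have hmul2 : n * (n - 3) + n * 2 = n * (n - 1) := by
    rw [← Nat.mul_add]
    congr 1
    omega
  have hCge : c - n ≤ C.card := by omega
  have hfin : n * (n - 3) ≤ (2 * k) * (n - 3) := by
    have h1 : (2 * k) * (n - 3) = 2 * (k * (n - 3)) := by ring
    omega
  have := Nat.le_of_mul_le_mul_right hfin (by omega : 0 < n - 3)
  omega

end BookAux

/-- For `n ≥ 4`, the complete graph `K_n` has book thickness
exactly `⌈n / 2⌉`. -/
theorem complete_graph_book_thickness (n : ℕ) (hn : 4 ≤ n) :
    bookThickness (⊤ : SimpleGraph (Fin n)) = (n + 1) / 2 := by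
  apply le_antisymm
  · exact Nat.sInf_le (kn_upper n (by omega))
  · exact le_csInf ⟨_, kn_upper n (by omega)⟩ (fun k hk => kn_lower n k hn hk)
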